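/- The fully degenerate Bell polynomials Bel_{n,λ}(x) := Σ_{k=0}^n {n brace k}_λ (1)_{k,λ} x^k have exponential generating function e_λ(x(e_λ(t) − 1)) = Σ_{n=0}^∞ Bel_{n,λ}(x) t^n/n!, as formal power series in t, where e_λ(u) denotes the formal series Σ_{m≥0} (1)_{m,λ} u^m/m!. -/

import Mathlib

open PowerSeries Finset

/-- The degenerate falling factorial `(x)_{n,λ}`. -/
def degFall (lam x : ℝ) (n : ℕ) : ℝ := ∏ i ∈ Finset.range n, (x - i * lam)

/-- The ordinary falling factorial `(x)_k`. -/
def fallF (x : ℝ) (k : ℕ) : ℝ := ∏ i ∈ Finset.range k, (x - i)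

/-- The degenerate exponential `e_λ^y(t) = Σ_{m≥0} (y)_{m,λ} t^m/m!`. -/
noncomputable def degExpP (lam y : ℝ) : PowerSeries ℝ :=
  PowerSeries.mk fun m => degFall lam y m / (Nat.factorial m)

/-- Composition `Σ_{m≥0} (c m / m!) g^m` of an exponential-type series with a
power series `g` with zero constant term: since `g^m` contributes nothing to the
`n`-th coefficient for `m > n`, the `n`-th coefficient is that of the truncated
finite sum. -/
noncomputable def expComp (c : ℕ → ℝ) (g : PowerSeries ℝ) : PowerSeries ℝ :=
  PowerSeries.mk fun n => PowerSeries.coeff (R := ℝ) n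
    (∑ m ∈ Finset.range (n + 1), PowerSeries.C (R := ℝ) (c m / (Nat.factorial m)) * g ^ m)

lemma degFall_zero (lam y : ℝ) : degFall lam y 0 = 1 := by simp [degFall]

lemma degFall_succ (lam y : ℝ) (n : ℕ) :
    degFall lam y (n + 1) = degFall lam y n * (y - n * lam) := by
  simp [degFall, Finset.prod_range_succ]

lemma fallF_zero (x : ℝ) : fallF x 0 = 1 := by simp [fallF]

lemma fallF_succ (x : ℝ) (k : ℕ) : fallF x (k + 1) = fallF x k * (x - k) := by
  simp [fallF, Finset.prod_range_succ]

lemma fallF_nat (N k : ℕ) : fallF (N : ℝ) k = (N.descFactorial k : ℝ) := by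
  induction k with
  | zero => simp [fallF]
  | succ k ih =>
    rw [fallF_succ, ih, Nat.descFactorial_succ, Nat.cast_mul]
    rcases le_or_gt k N with h | h
    · rw [Nat.cast_sub h]; ring
    · rw [Nat.descFactorial_eq_zero_iff_lt.mpr h]; simp

lemma degFall_vandermonde (lam a b : ℝ) (n : ℕ) :
    degFall lam (a + b) n =
      ∑ k ∈ range (n + 1), (n.choose k : ℝ) * degFall lam a k * degFall lam b (n - k) := by
  induction n with
  | zero => simp [degFall]
  | succ n ih =>
    have e2 : ∑ k ∈ range (n + 1), (n.choose (k+1) : ℝ) * degFall lam a (k+1) * degFall lam b (n - k)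
          + (n.choose 0 : ℝ) * degFall lam a 0 * degFall lam b (n + 1)
        = ∑ k ∈ range (n + 1), (n.choose k : ℝ) * degFall lam a k * degFall lam b (n - k + 1) := by
      have := Finset.sum_range_succ' (fun k => (n.choose k : ℝ) * degFall lam a k * degFall lam b (n + 1 - k)) (n + 1)
      simp only [Nat.succ_sub_succ, Nat.sub_zero] at this
      rw [← this, Finset.sum_range_succ]
      simp only [Nat.choose_succ_self, Nat.cast_zero, zero_mul, add_zero]
      apply Finset.sum_congr rfl
      intro k hk
      have hk' : k ≤ n := Nat.lt_succ_iff.mp (mem_range.mp hk)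
      have : n + 1 - k = n - k + 1 := by omega
      rw [this]
    have hR : ∑ k ∈ range (n + 1 + 1), ((n+1).choose k : ℝ) * degFall lam a k * degFall lam b (n + 1 - k)
        = ∑ k ∈ range (n + 1), ((n.choose k : ℝ) * degFall lam a (k+1) * degFall lam b (n - k)
            + (n.choose k : ℝ) * degFall lam a k * degFall lam b (n - k + 1)) := by
      rw [Finset.sum_range_succ' (fun k => ((n+1).choose k : ℝ) * degFall lam a k * degFall lam b (n + 1 - k)) (n + 1)]
      simp only [Nat.succ_sub_succ, Nat.sub_zero, Nat.choose_succ_succ, Nat.cast_add, Nat.choose_zero_right, Nat.cast_one, one_mul, degFall_zero, Nat.succ_eq_add_one]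
      have e1 : ∀ k ∈ range (n + 1),
          ((n.choose k : ℝ) + (n.choose (k+1) : ℝ)) * degFall lam a (k+1) * degFall lam b (n - k)
          = (n.choose k : ℝ) * degFall lam a (k+1) * degFall lam b (n - k)
            + (n.choose (k+1) : ℝ) * degFall lam a (k+1) * degFall lam b (n - k) := by
        intro k _; ring
      have e2' : (1 : ℝ) * degFall lam b (n + 1) = (n.choose 0 : ℝ) * degFall lam a 0 * degFall lam b (n + 1) := by
        simp [degFall_zero]
      calc ∑ k ∈ range (n + 1), ((n.choose k : ℝ) + (n.choose (k+1) : ℝ)) * degFall lam a (k+1) * degFall lam b (n - k)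
            + degFall lam b (n + 1)
          = ∑ k ∈ range (n + 1), (n.choose k : ℝ) * degFall lam a (k+1) * degFall lam b (n - k)
            + (∑ k ∈ range (n + 1), (n.choose (k+1) : ℝ) * degFall lam a (k+1) * degFall lam b (n - k)
              + (n.choose 0 : ℝ) * degFall lam a 0 * degFall lam b (n + 1)) := by
            rw [Finset.sum_congr rfl e1, Finset.sum_add_distrib]
            simp [degFall_zero, add_assoc]
        _ = ∑ k ∈ range (n + 1), (n.choose k : ℝ) * degFall lam a (k+1) * degFall lam b (n - k)
            + ∑ k ∈ range (n + 1), (n.choose k : ℝ) * degFall lam a k * degFall lam b (n - k + 1) := by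
            rw [e2]
        _ = _ := by rw [← Finset.sum_add_distrib]
    rw [degFall_succ, ih, hR, Finset.sum_mul]
    apply Finset.sum_congr rfl
    intro k hk
    have hk' : k ≤ n := Nat.lt_succ_iff.mp (mem_range.mp hk)
    rw [degFall_succ, degFall_succ]
    have hc : ((n - k : ℕ) : ℝ) = (n : ℝ) - k := by rw [Nat.cast_sub hk']
    rw [hc]; ring

lemma factorial_ne (n : ℕ) : ((n.factorial : ℝ)) ≠ 0 :=
  Nat.cast_ne_zero.mpr (Nat.factorial_ne_zero n)

lemma degExpP_mul (lam a b : ℝ) :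
    degExpP lam (a + b) = degExpP lam a * degExpP lam b := by
  ext n
  rw [PowerSeries.coeff_mul, Finset.Nat.sum_antidiagonal_eq_sum_range_succ_mk]
  simp only [degExpP, coeff_mk]
  rw [degFall_vandermonde, Finset.sum_div]
  apply Finset.sum_congr rfl
  intro k hk
  have hk' : k ≤ n := Nat.lt_succ_iff.mp (mem_range.mp hk)
  rw [Nat.cast_choose ℝ hk']
  have h1 := factorial_ne k
  have h2 := factorial_ne (n - k)
  have h3 := factorial_ne n
  field_simp

lemma degFall_zero_left (lam : ℝ) (n : ℕ) : degFall lam 0 (n + 1) = 0 := by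
  apply Finset.prod_eq_zero (Finset.mem_range.mpr (Nat.succ_pos n))
  simp

lemma degExpP_zero (lam : ℝ) : degExpP lam 0 = 1 := by
  ext n
  cases n with
  | zero => simp [degExpP, degFall_zero]
  | succ n =>
    simp [degExpP, degFall_zero_left, PowerSeries.coeff_one]

lemma degExpP_pow (lam : ℝ) (N : ℕ) : degExpP lam (N : ℝ) = degExpP lam 1 ^ N := by
  induction N with
  | zero => simpa using degExpP_zero lam
  | succ N ih =>
    have : ((N + 1 : ℕ) : ℝ) = (N : ℝ) + 1 := by push_cast; ring
    rw [this, degExpP_mul, ih, pow_succ]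

lemma constCoeff_g (lam : ℝ) : constantCoeff (R := ℝ) (degExpP lam 1 - 1) = 0 := by
  simp [degExpP, ← PowerSeries.coeff_zero_eq_constantCoeff, degFall_zero]

lemma coeff_g_pow_zero (lam : ℝ) {n m : ℕ} (h : n < m) :
    PowerSeries.coeff (R := ℝ) n ((degExpP lam 1 - 1) ^ m) = 0 := by
  have hd : (X : PowerSeries ℝ) ^ m ∣ (degExpP lam 1 - 1) ^ m :=
    pow_dvd_pow_of_dvd (PowerSeries.X_dvd_iff.mpr (constCoeff_g lam)) m
  exact (PowerSeries.X_pow_dvd_iff.mp hd) n h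

lemma key_nat (lam : ℝ) (N n : ℕ) :
    degFall lam (N : ℝ) n / (n.factorial : ℝ) =
      ∑ m ∈ range (n + 1),
        (N.choose m : ℝ) * PowerSeries.coeff (R := ℝ) n ((degExpP lam 1 - 1) ^ m) := by
  have h1 : degFall lam (N : ℝ) n / (n.factorial : ℝ)
      = PowerSeries.coeff (R := ℝ) n (degExpP lam (N : ℝ)) := by simp [degExpP]
  rw [h1, degExpP_pow]
  have h2 : degExpP lam 1 ^ N = ∑ m ∈ range (N + 1),
      (degExpP lam 1 - 1) ^ m * (1 : PowerSeries ℝ) ^ (N - m) * (N.choose m : PowerSeries ℝ) := by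
    rw [← add_pow]; ring_nf
  rw [h2, map_sum]
  have hterm : ∀ m, PowerSeries.coeff (R := ℝ) n
      ((degExpP lam 1 - 1) ^ m * (1 : PowerSeries ℝ) ^ (N - m) * (N.choose m : PowerSeries ℝ))
      = (N.choose m : ℝ) * PowerSeries.coeff (R := ℝ) n ((degExpP lam 1 - 1) ^ m) := by
    intro m
    rw [one_pow, mul_one]
    have : ((N.choose m : ℕ) : PowerSeries ℝ) = PowerSeries.C (R := ℝ) ((N.choose m : ℕ) : ℝ) := by
      simp
    rw [this, mul_comm, PowerSeries.coeff_C_mul]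
  simp only [hterm]
  -- extend both sums to range (N + n + 2)
  rw [Finset.sum_subset (Finset.range_subset_range.mpr (by omega : N + 1 ≤ N + n + 2))
      (by intro m _ hm
          have : N < m := by simp only [mem_range] at *; omega
          rw [Nat.choose_eq_zero_of_lt this]; simp)]
  rw [Finset.sum_subset (Finset.range_subset_range.mpr (by omega : n + 1 ≤ N + n + 2))
      (by intro m _ hm
          have : n < m := by simp only [mem_range] at *; omega
          rw [coeff_g_pow_zero lam this]; simp)]

lemma triangular (n : ℕ) (f : ℕ → ℝ)
    (h : ∀ N : ℕ, N ≤ n → ∑ m ∈ range (n + 1), f m * fallF (N : ℝ) m = 0) :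
    ∀ m, m ≤ n → f m = 0 := by
  intro m
  induction m using Nat.strong_induction_on with
  | _ m ih =>
    intro hm
    have h2 := h m hm
    rw [Finset.sum_eq_single m] at h2
    · have hfact : fallF (m : ℝ) m = (m.factorial : ℝ) := by
        rw [fallF_nat, Nat.descFactorial_self]
      rw [hfact] at h2
      have := factorial_ne m
      rcases mul_eq_zero.mp h2 with h' | h'
      · exact h'
      · exact absurd h' this
    · intro b hb hbm
      rcases lt_or_gt_of_ne hbm with hlt | hgt
      · rw [ih b hlt (le_trans hlt.le hm)]; ring
      · rw [fallF_nat, Nat.descFactorial_eq_zero_iff_lt.mpr hgt]; simp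
    · intro hmem
      exact absurd (mem_range.mpr (Nat.lt_succ_of_le hm)) hmem

/-- The fully degenerate Bell polynomials
`Bel_{n,λ}(x) = Σ_{k=0}^n {n brace k}_λ (1)_{k,λ} x^k` have exponential
generating function `e_λ(x(e_λ(t) − 1)) = Σ_n Bel_{n,λ}(x) t^n/n!`, where
`{n brace k}_λ = S n k` is defined by `(x)_{n,λ} = Σ_k S n k (x)_k`. -/
theorem stmt3 (lam x : ℝ) (S : ℕ → ℕ → ℝ)
    (hS : ∀ (n : ℕ) (z : ℝ),
      degFall lam z n = ∑ k ∈ Finset.range (n + 1), S n k * fallF z k) :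
    expComp (fun m => degFall lam 1 m) (PowerSeries.C (R := ℝ) x * (degExpP lam 1 - 1)) =
      PowerSeries.mk fun n =>
        (∑ k ∈ Finset.range (n + 1), S n k * degFall lam 1 k * x ^ k) /
          (Nat.factorial n) := by
  ext n
  -- identify S n m with coefficients of (e-1)^m
  have hSc : ∀ m, m ≤ n → S n m =
      (n.factorial : ℝ) * PowerSeries.coeff (R := ℝ) n ((degExpP lam 1 - 1) ^ m) / (m.factorial : ℝ) := by
    have htri := triangular n (fun m => S n m -
      (n.factorial : ℝ) * PowerSeries.coeff (R := ℝ) n ((degExpP lam 1 - 1) ^ m) / (m.factorial : ℝ))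
    have hz : ∀ N : ℕ, N ≤ n → ∑ m ∈ range (n + 1),
        (S n m - (n.factorial : ℝ) * PowerSeries.coeff (R := ℝ) n ((degExpP lam 1 - 1) ^ m) / (m.factorial : ℝ))
          * fallF (N : ℝ) m = 0 := by
      intro N _
      have hkey := key_nat lam N n
      have hS' := hS n (N : ℝ)
      have hexp : ∀ m ∈ range (n + 1),
          (S n m - (n.factorial : ℝ) * PowerSeries.coeff (R := ℝ) n ((degExpP lam 1 - 1) ^ m) / (m.factorial : ℝ))
            * fallF (N : ℝ) m
          = S n m * fallF (N : ℝ) m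
            - (n.factorial : ℝ) * ((N.choose m : ℝ) * PowerSeries.coeff (R := ℝ) n ((degExpP lam 1 - 1) ^ m)) := by
        intro m _
        have hdf : fallF (N : ℝ) m = (N.choose m : ℝ) * (m.factorial : ℝ) := by
          rw [fallF_nat, Nat.descFactorial_eq_factorial_mul_choose]
          push_cast; ring
        rw [hdf]
        have := factorial_ne m
        field_simp
      rw [Finset.sum_congr rfl hexp, Finset.sum_sub_distrib, ← Finset.mul_sum, ← hkey, ← hS']
      field_simp
      simp
    intro m hm
    have := htri hz m hm
    linarith [this]
  -- compute coefficient of LHS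
  simp only [expComp, coeff_mk, map_sum]
  have hterm : ∀ m, PowerSeries.coeff (R := ℝ) n
      (PowerSeries.C (R := ℝ) (degFall lam 1 m / (m.factorial : ℝ)) * (PowerSeries.C (R := ℝ) x * (degExpP lam 1 - 1)) ^ m)
      = degFall lam 1 m / (m.factorial : ℝ) * (x ^ m * PowerSeries.coeff (R := ℝ) n ((degExpP lam 1 - 1) ^ m)) := by
    intro m
    rw [mul_pow, ← map_pow, ← mul_assoc, ← map_mul, PowerSeries.coeff_C_mul]
    ring
  simp only [hterm]
  rw [Finset.sum_div]
  apply Finset.sum_congr rfl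
  intro m hmem
  have hm : m ≤ n := Nat.lt_succ_iff.mp (mem_range.mp hmem)
  rw [hSc m hm]
  have h1 := factorial_ne m
  have h2 := factorial_ne n
  field_simp
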